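/- Let s₁, s₂ ∈ ℝ and let f(x) = x⁶ − s₁x⁴ + s₂x² − 1, and suppose f has six distinct complex roots α₁, …, α₆. Call a vector w ∈ ℝ_{>0}⁶ admissible if w_i = w_j whenever α_j = conj(α_i), and for admissible w define the real quadratic Q_w(x) = Σ_{i=1}^6 w_i (x − α_i)(x − conj(α_i)) and θ(w) = |Δ(Q_w)|³ / (w₁w₂w₃w₄w₅w₆), where Δ(Q_w) is the discriminant of Q_w. If w is a global minimizer of θ over all admissible vectors, then: the coefficient of x in Q_w is zero (so Q_w(x) = A x² + C with A, C > 0), the unique root of Q_w in the complex upper half-plane is purely imaginary, equal to c·i with c = √(C/A) > 0, and moreover either c·i or i/c lies in the standard fundamental domain { z in the upper half-plane : |Re z| ≤ 1/2 and |z| ≥ 1 }. Consequently, the binary sextic f(x,z) = x⁶ − s₁x⁴z² + s₂x²z⁴ − z⁶ or the binary sextic f(−z,x) is reduced. -/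

import Mathlib

open Complex

/-- Coefficient of `x²` in `Q_w(x) = Σ w_i (x - α_i)(x - conj α_i)`. -/
noncomputable def QA (α : Fin 6 → ℂ) (w : Fin 6 → ℝ) : ℝ := ∑ i, w i

/-- Coefficient of `x` in `Q_w(x) = Σ w_i (x - α_i)(x - conj α_i)`. -/
noncomputable def QB (α : Fin 6 → ℂ) (w : Fin 6 → ℝ) : ℝ := -∑ i, w i * (2 * (α i).re)

/-- Constant coefficient of `Q_w(x) = Σ w_i (x - α_i)(x - conj α_i)`. -/
noncomputable def QC (α : Fin 6 → ℂ) (w : Fin 6 → ℝ) : ℝ :=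
  ∑ i, w i * Complex.normSq (α i)

/-- `θ(w) = |Δ(Q_w)|³ / (w₁⋯w₆)` with `Δ(Q_w) = B² - 4AC` the discriminant of `Q_w`. -/
noncomputable def theta (α : Fin 6 → ℂ) (w : Fin 6 → ℝ) : ℝ :=
  |QB α w ^ 2 - 4 * QA α w * QC α w| ^ 3 / ∏ i, w i

/-- A vector `w ∈ ℝ_{>0}⁶` is admissible if `w_i = w_j` whenever `α_j = conj (α_i)`. -/
def Admissible (α : Fin 6 → ℂ) (w : Fin 6 → ℝ) : Prop :=
  (∀ i, 0 < w i) ∧ ∀ i j, α j = (starRingEnd ℂ) (α i) → w i = w j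

section Aux

lemma stmt15.amgm (x y : ℝ) (hx : 0 ≤ x) (hy : 0 ≤ y) :
    2*(Real.sqrt x * Real.sqrt y) ≤ x + y := by
  nlinarith [Real.sq_sqrt hx, Real.sq_sqrt hy, sq_nonneg (Real.sqrt x - Real.sqrt y),
    Real.sqrt_nonneg x, Real.sqrt_nonneg y]

lemma stmt15.strict_amgm (x y : ℝ) (hx : 0 < x) (hy : 0 < y) (hxy : x ≠ y) :
    2*(Real.sqrt x * Real.sqrt y) < x + y := by
  have hne : Real.sqrt x ≠ Real.sqrt y := fun h => hxy ((Real.sqrt_inj hx.le hy.le).mp h)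
  nlinarith [Real.sq_sqrt hx.le, Real.sq_sqrt hy.le,
    sq_pos_of_ne_zero (sub_ne_zero.mpr hne), Real.sqrt_nonneg x, Real.sqrt_nonneg y]

/-- The summand in the double-sum decomposition of `N(w) - N(v)`. -/
noncomputable def stmt15.Hm (a b m r : Fin 6 → ℝ) (i j : Fin 6) : ℝ :=
  (1/8)*(((a i + b i) * (a j + b j)
      - 4 * (Real.sqrt (a i * b i) * Real.sqrt (a j * b j)))*(m i + m j))
    - (1/4)*(((a i - b i) * (a j - b j))*(r i * r j))

namespace stmt15
variable (a b m r : Fin 6 → ℝ)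

lemma Hm_sum (hSb : ∑ i, b i = ∑ i, a i) (hSbm : ∑ i, b i * m i = ∑ i, a i * m i)
    (hSbr : ∑ i, b i * r i = -∑ i, a i * r i) :
    ∑ i, ∑ j, Hm a b m r i j
      = (∑ i, a i) * (∑ i, a i * m i) - (∑ i, a i * r i)^2
        - (∑ i, Real.sqrt (a i * b i)) * (∑ i, Real.sqrt (a i * b i) * m i) := by
  set v : Fin 6 → ℝ := fun i => Real.sqrt (a i * b i) with hv
  have step1 : ∀ i : Fin 6, ∑ j, Hm a b m r i j
      = ((1/8)*(a i + b i)) * (∑ j, (a j + b j) * m j)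
        + ((1/8)*((a i + b i) * m i)) * (∑ j, (a j + b j))
        - ((1/2)*(v i)) * (∑ j, v j * m j)
        - ((1/2)*(v i * m i)) * (∑ j, v j)
        - ((1/4)*((a i - b i) * r i)) * (∑ j, (a j - b j) * r j) := by
    intro i
    rw [Finset.mul_sum, Finset.mul_sum, Finset.mul_sum, Finset.mul_sum, Finset.mul_sum,
      ← Finset.sum_add_distrib, ← Finset.sum_sub_distrib, ← Finset.sum_sub_distrib,
      ← Finset.sum_sub_distrib]
    exact Finset.sum_congr rfl fun j _ => by simp only [Hm, hv]; ring
  rw [Finset.sum_congr rfl fun i _ => step1 i]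
  have hSP : ∑ i, (a i + b i) = 2 * ∑ i, a i := by
    rw [Finset.sum_add_distrib, hSb]; ring
  have hSPm : ∑ i, (a i + b i) * m i = 2 * ∑ i, a i * m i := by
    rw [Finset.sum_congr rfl fun i _ => add_mul (a i) (b i) (m i), Finset.sum_add_distrib, hSbm]
    ring
  have hSDr : ∑ i, (a i - b i) * r i = 2 * ∑ i, a i * r i := by
    rw [Finset.sum_congr rfl fun i _ => sub_mul (a i) (b i) (r i), Finset.sum_sub_distrib, hSbr]
    ring
  rw [Finset.sum_sub_distrib, Finset.sum_sub_distrib, Finset.sum_sub_distrib,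
    Finset.sum_add_distrib, ← Finset.sum_mul, ← Finset.sum_mul, ← Finset.sum_mul,
    ← Finset.sum_mul, ← Finset.sum_mul]
  simp only [← Finset.mul_sum, hv]
  rw [hSP, hSPm, hSDr]
  ring

lemma K1 (ha : ∀ i, 0 < a i) (hb : ∀ i, 0 < b i) (i j : Fin 6) :
    |(a i - b i)*(a j - b j)| ≤ (a i + b i)*(a j + b j)
      - 4*(Real.sqrt (a i * b i) * Real.sqrt (a j * b j)) := by
  have e1 : Real.sqrt (a i * b i) * Real.sqrt (a j * b j)
      = Real.sqrt (a i * b j) * Real.sqrt (a j * b i) := by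
    rw [← Real.sqrt_mul (mul_pos (ha i) (hb i)).le, ← Real.sqrt_mul (mul_pos (ha i) (hb j)).le]
    ring_nf
  have e2 : Real.sqrt (a i * b i) * Real.sqrt (a j * b j)
      = Real.sqrt (a i * a j) * Real.sqrt (b i * b j) := by
    rw [← Real.sqrt_mul (mul_pos (ha i) (hb i)).le, ← Real.sqrt_mul (mul_pos (ha i) (ha j)).le]
    ring_nf
  have g1 : 2*(Real.sqrt (a i * b j) * Real.sqrt (a j * b i)) ≤ a i * b j + a j * b i :=
    amgm _ _ (mul_pos (ha i) (hb j)).le (mul_pos (ha j) (hb i)).le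
  have g2 : 2*(Real.sqrt (a i * a j) * Real.sqrt (b i * b j)) ≤ a i * a j + b i * b j :=
    amgm _ _ (mul_pos (ha i) (ha j)).le (mul_pos (hb i) (hb j)).le
  rw [abs_le]
  constructor <;> nlinarith [e1, e2, g1, g2]

lemma Hm_nonneg (ha : ∀ i, 0 < a i) (hb : ∀ i, 0 < b i) (hm : ∀ i, 0 < m i)
    (hrm : ∀ i, r i ^ 2 ≤ m i) (i j : Fin 6) : 0 ≤ Hm a b m r i j := by
  have k1 := K1 a b ha hb i j
  have h2 : 2*(|r i| * |r j|) ≤ m i + m j := by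
    nlinarith [sq_nonneg (|r i| - |r j|), _root_.sq_abs (r i), _root_.sq_abs (r j), hrm i, hrm j]
  have h3 : (a i - b i)*(a j - b j)*(r i * r j) ≤ |(a i - b i)*(a j - b j)| * (|r i| * |r j|) := by
    calc (a i - b i)*(a j - b j)*(r i * r j) ≤ |(a i - b i)*(a j - b j)*(r i * r j)| :=
          le_abs_self _
      _ = |(a i - b i)*(a j - b j)| * (|r i| * |r j|) := by
          rw [abs_mul, abs_mul, abs_mul]
  unfold Hm
  nlinarith [abs_nonneg ((a i - b i)*(a j - b j)), abs_nonneg (r i), abs_nonneg (r j),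
    hm i, hm j, mul_nonneg (abs_nonneg (r i)) (abs_nonneg (r j))]

lemma Hm_pos (ha : ∀ i, 0 < a i) (hb : ∀ i, 0 < b i) (hm : ∀ i, 0 < m i)
    (i j : Fin 6) (hD : a i ≠ b i)
    (hkey : a j = b j ∨ (a j ≠ b j ∧ 2*(|r i| * |r j|) < m i + m j)) :
    0 < Hm a b m r i j := by
  rcases hkey with hEq | ⟨hDj, hstrict⟩
  · have hvj : Real.sqrt (a j * b j) = a j := by
      rw [← hEq, Real.sqrt_mul_self (ha j).le]
    have hvi : 2*(Real.sqrt (a i * b i)) < a i + b i := by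
      have h := strict_amgm (a i) (b i) (ha i) (hb i) hD
      rwa [← Real.sqrt_mul (ha i).le] at h
    unfold Hm
    rw [hvj, ← hEq]
    have hj := ha j
    nlinarith [mul_pos (mul_pos
      (by linarith : (0:ℝ) < a i + b i - 2*Real.sqrt (a i * b i)) (ha j))
      (by linarith [hm i, hm j] : (0:ℝ) < m i + m j)]
  · have k1 := K1 a b ha hb i j
    have h3 : (a i - b i)*(a j - b j)*(r i * r j) ≤ |(a i - b i)*(a j - b j)| * (|r i| * |r j|) := by
      calc (a i - b i)*(a j - b j)*(r i * r j) ≤ |(a i - b i)*(a j - b j)*(r i * r j)| :=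
            le_abs_self _
        _ = |(a i - b i)*(a j - b j)| * (|r i| * |r j|) := by
            rw [abs_mul, abs_mul, abs_mul]
    have hDD : 0 < |(a i - b i)*(a j - b j)| := by
      rw [abs_pos]
      exact mul_ne_zero (sub_ne_zero.mpr hD) (sub_ne_zero.mpr hDj)
    unfold Hm
    nlinarith [mul_le_mul_of_nonneg_right k1 (by linarith [hm i, hm j] : (0:ℝ) ≤ m i + m j),
      mul_lt_mul_of_pos_left hstrict hDD, h3,
      mul_nonneg (abs_nonneg ((a i - b i)*(a j - b j)))
        (mul_nonneg (abs_nonneg (r i)) (abs_nonneg (r j)))]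

lemma key_ineq (z₁ z₂ : ℂ) (h1 : z₂ ≠ z₁) (h2 : z₂ ≠ -z₁) :
    2*(|z₁.re| * |z₂.re|) < Complex.normSq z₁ + Complex.normSq z₂ := by
  by_contra hle
  push_neg at hle
  have hm1 : Complex.normSq z₁ = z₁.re * z₁.re + z₁.im * z₁.im := Complex.normSq_apply z₁
  have hm2 : Complex.normSq z₂ = z₂.re * z₂.re + z₂.im * z₂.im := Complex.normSq_apply z₂
  have habs : 2*(|z₁.re| * |z₂.re|) ≤ z₁.re ^ 2 + z₂.re ^ 2 := by
    nlinarith [sq_nonneg (|z₁.re| - |z₂.re|), _root_.sq_abs z₁.re, _root_.sq_abs z₂.re]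
  have him1 : z₁.im = 0 := by nlinarith [mul_self_nonneg z₁.im, mul_self_nonneg z₂.im]
  have him2 : z₂.im = 0 := by nlinarith [mul_self_nonneg z₁.im, mul_self_nonneg z₂.im]
  have hrabs : |z₁.re| = |z₂.re| := by
    nlinarith [sq_nonneg (|z₁.re| - |z₂.re|), _root_.sq_abs z₁.re, _root_.sq_abs z₂.re,
      abs_nonneg z₁.re, abs_nonneg z₂.re, mul_self_nonneg z₁.im, mul_self_nonneg z₂.im]
  rcases abs_eq_abs.mp hrabs.symm with heq | heq
  · exact h1 (Complex.ext heq (by rw [him1, him2]))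
  · exact h2 (Complex.ext (by simpa using heq) (by simp [him1, him2]))

end stmt15
end Aux

set_option maxHeartbeats 1000000 in
/-- Let `f(x) = x⁶ - s₁x⁴ + s₂x² - 1` have six distinct complex roots
`α₁, …, α₆`.  If `w` is an admissible global minimizer of `θ`, then the coefficient of `x`
in `Q_w` vanishes (so `Q_w = A x² + C` with `A, C > 0`), the unique root of `Q_w` in the
upper half-plane is the purely imaginary `c·i` with `c = √(C/A) > 0`, and either `c·i` or
`i/c` lies in the fundamental domain `{z : |Re z| ≤ 1/2, |z| ≥ 1}`.  Consequently, the
binary sextic `f(x,z)` or `f(-z,x)` is reduced. -/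
theorem stmt15 (s₁ s₂ : ℝ) (α : Fin 6 → ℂ) (hα : Function.Injective α)
    (hroots : (Polynomial.X ^ 6 - Polynomial.C (s₁ : ℂ) * Polynomial.X ^ 4
        + Polynomial.C (s₂ : ℂ) * Polynomial.X ^ 2 - 1 : Polynomial ℂ)
      = ∏ i : Fin 6, (Polynomial.X - Polynomial.C (α i)))
    (w : Fin 6 → ℝ) (hw : Admissible α w)
    (hmin : ∀ v : Fin 6 → ℝ, Admissible α v → theta α w ≤ theta α v) :
    QB α w = 0 ∧ 0 < QA α w ∧ 0 < QC α w ∧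
    (0 : ℝ) < Real.sqrt (QC α w / QA α w) ∧
    (QA α w : ℂ) * ((Real.sqrt (QC α w / QA α w) : ℂ) * Complex.I) ^ 2
        + (QB α w : ℂ) * ((Real.sqrt (QC α w / QA α w) : ℂ) * Complex.I)
        + (QC α w : ℂ) = 0 ∧
    ((|(((Real.sqrt (QC α w / QA α w) : ℂ)) * Complex.I).re| ≤ 1 / 2 ∧
        1 ≤ ‖(Real.sqrt (QC α w / QA α w) : ℂ) * Complex.I‖) ∨
      (|(((Real.sqrt (QC α w / QA α w) : ℂ))⁻¹ * Complex.I).re| ≤ 1 / 2 ∧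
        1 ≤ ‖((Real.sqrt (QC α w / QA α w) : ℂ))⁻¹ * Complex.I‖)) := by
  classical
  -- evaluation form of the root hypothesis
  have hev : ∀ x : ℂ, ∏ j, (x - α j) = x^6 - s₁*x^4 + s₂*x^2 - 1 := by
    intro x
    have := congrArg (Polynomial.eval x) hroots
    simpa [Polynomial.eval_prod] using this.symm
  have hne0 : ∀ i, α i ≠ 0 := by
    intro i h
    have h0 := hev 0
    rw [Finset.prod_eq_zero (Finset.mem_univ i) (by rw [h]; ring)] at h0
    norm_num at h0
  have hexists : ∀ i, ∃ j, α j = -α i := by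
    intro i
    have h1 : ∏ j, (α i - α j) = 0 :=
      Finset.prod_eq_zero (Finset.mem_univ i) (by ring)
    have h2 : ∏ j, (-α i - α j) = 0 := by
      rw [hev]
      have h3 := hev (α i)
      rw [h1] at h3
      linear_combination -h3
    obtain ⟨j, -, hj⟩ := Finset.prod_eq_zero_iff.mp h2
    exact ⟨j, by linear_combination -hj⟩
  set σ : Fin 6 → Fin 6 := fun i => (hexists i).choose with hσdef
  have hσ : ∀ i, α (σ i) = -α i := fun i => (hexists i).choose_spec
  have hσinj : Function.Injective σ := by
    intro i j h
    apply hα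
    have h1 := hσ i
    rw [h, hσ j] at h1
    exact (neg_injective h1).symm
  have hσbij : Function.Bijective σ := Finite.injective_iff_bijective.mp hσinj
  have hσσ : ∀ i, σ (σ i) = i := by
    intro i
    apply hα
    rw [hσ, hσ, neg_neg]
  -- abbreviations
  set m : Fin 6 → ℝ := fun i => Complex.normSq (α i) with hmdef
  set r : Fin 6 → ℝ := fun i => (α i).re with hrdef
  have hm : ∀ i, 0 < m i := fun i => Complex.normSq_pos.mpr (hne0 i)
  have hrm : ∀ i, r i ^ 2 ≤ m i := by
    intro i
    simp only [hmdef, hrdef, Complex.normSq_apply]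
    nlinarith [mul_self_nonneg (α i).im]
  have hmσ : ∀ i, m (σ i) = m i := by
    intro i; simp only [hmdef, hσ i, Complex.normSq_neg]
  have hrσ : ∀ i, r (σ i) = -r i := by
    intro i; simp only [hrdef, hσ i, Complex.neg_re]
  have hwpos := hw.1
  -- the key symmetry of the minimizer
  have hsym : ∀ i, w (σ i) = w i := by
    by_contra hcon
    push_neg at hcon
    obtain ⟨i₀, hi₀⟩ := hcon
    -- pick an index outside the pair {i₀, σ i₀}
    have hjex : ∃ j₀ : Fin 6, j₀ ≠ i₀ ∧ j₀ ≠ σ i₀ := by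
      have hne : (({i₀, σ i₀} : Finset (Fin 6))ᶜ).Nonempty := by
        rw [← Finset.card_pos, Finset.card_compl]
        have h2 : ({i₀, σ i₀} : Finset (Fin 6)).card ≤ 2 := by
          apply le_trans (Finset.card_insert_le _ _)
          simp
        simp only [Fintype.card_fin]
        omega
      obtain ⟨j₀, hj₀⟩ := hne
      simp only [Finset.mem_compl, Finset.mem_insert, Finset.mem_singleton, not_or] at hj₀
      exact ⟨j₀, hj₀.1, hj₀.2⟩
    obtain ⟨j₀, hj₀i, hj₀σ⟩ := hjex
    have hi₀' : w i₀ ≠ w (σ i₀) := fun h => hi₀ h.symm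
    set b : Fin 6 → ℝ := fun i => w (σ i) with hbdef
    set v : Fin 6 → ℝ := fun i => Real.sqrt (w i * b i) with hvdef
    have hbpos : ∀ i, 0 < b i := fun i => hwpos (σ i)
    have hvpos : ∀ i, 0 < v i := fun i => Real.sqrt_pos.mpr (mul_pos (hwpos i) (hbpos i))
    have hvadm : Admissible α v := by
      refine ⟨hvpos, fun i j hconj => ?_⟩
      have h1 : w i = w j := hw.2 i j hconj
      have h2 : w (σ i) = w (σ j) := by
        apply hw.2
        rw [hσ, hσ, hconj]
        simp
      simp only [hvdef, hbdef, h1, h2]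
    have hvσ : ∀ i, v (σ i) = v i := by
      intro i
      simp only [hvdef, hbdef, hσσ i, mul_comm]
    -- reindexing facts
    have hSb : ∑ i, b i = ∑ i, w i := hσbij.sum_comp w
    have hSbm : ∑ i, b i * m i = ∑ i, w i * m i := by
      have h1 : ∑ i, b i * m i = ∑ i, w (σ i) * m (σ i) :=
        Finset.sum_congr rfl fun i _ => by rw [hmσ]
      rw [h1]
      exact hσbij.sum_comp fun k => w k * m k
    have hSbr : ∑ i, b i * r i = -∑ i, w i * r i := by
      have h1 : ∑ i, b i * r i = ∑ i, -(w (σ i) * r (σ i)) :=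
        Finset.sum_congr rfl fun i _ => by rw [hrσ]; ring
      rw [h1, Finset.sum_neg_distrib]
      rw [hσbij.sum_comp fun k => w k * r k]
    -- products agree
    have hwprodpos : 0 < ∏ i, w i := Finset.prod_pos fun i _ => hwpos i
    have hprod : ∏ i, v i = ∏ i, w i := by
      have h1 : (∏ i, v i)^2 = (∏ i, w i)^2 := by
        rw [← Finset.prod_pow, ← Finset.prod_pow]
        have h2 : ∀ i : Fin 6, v i ^ 2 = w i * b i := fun i =>
          Real.sq_sqrt (mul_pos (hwpos i) (hbpos i)).le
        rw [Finset.prod_congr rfl fun i _ => h2 i, Finset.prod_mul_distrib,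
          (by exact hσbij.prod_comp w : ∏ i, b i = ∏ i, w i), ← sq]
        exact (Finset.prod_pow _ 2 w).symm
      exact (pow_left_inj₀ (Finset.prod_nonneg fun i _ => (hvpos i).le) hwprodpos.le
        two_ne_zero).mp h1
    -- QB of v vanishes
    have hQBv : QB α v = 0 := by
      have h1 : ∑ i, v i * (2 * (α i).re) = ∑ i, v (σ i) * (2 * (α (σ i)).re) :=
        (hσbij.sum_comp fun k => v k * (2 * (α k).re)).symm
      have h2 : ∑ i, v (σ i) * (2 * (α (σ i)).re) = -∑ i, v i * (2 * (α i).re) := by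
        rw [← Finset.sum_neg_distrib]
        refine Finset.sum_congr rfl fun i _ => ?_
        rw [hvσ i, hσ i, Complex.neg_re]
        ring
      rw [h2] at h1
      have h3 : ∑ i, v i * (2 * (α i).re) = 0 := by linarith
      simp only [QB, h3, neg_zero]
    -- positivity of QA, QC of v
    have hQAv : 0 < QA α v := Finset.sum_pos (fun i _ => hvpos i) Finset.univ_nonempty
    have hQCv : 0 < QC α v :=
      Finset.sum_pos (fun i _ => mul_pos (hvpos i) (hm i)) Finset.univ_nonempty
    -- minimality gives N_w ≤ N_v
    have hθ := hmin v hvadm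
    unfold theta at hθ
    rw [hprod] at hθ
    have hcube : |QB α w ^ 2 - 4 * QA α w * QC α w| ^ 3
        ≤ |QB α v ^ 2 - 4 * QA α v * QC α v| ^ 3 :=
      (div_le_div_iff_of_pos_right hwprodpos).mp hθ
    have habs_v : |QB α v ^ 2 - 4 * QA α v * QC α v| = 4 * QA α v * QC α v := by
      rw [hQBv]
      rw [abs_of_nonpos (by nlinarith)]
      ring
    rw [habs_v] at hcube
    have habs_le : |QB α w ^ 2 - 4 * QA α w * QC α w| ≤ 4 * QA α v * QC α v :=
      (pow_le_pow_iff_left₀ (abs_nonneg _) (by positivity) (by norm_num)).mp hcube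
    have hNw : 4 * QA α w * QC α w - QB α w ^ 2 ≤ 4 * QA α v * QC α v := by
      have := le_abs_self (4 * QA α w * QC α w - QB α w ^ 2)
      rw [abs_sub_comm] at this
      linarith
    -- the strict inequality from the double-sum decomposition
    have hkey : w j₀ = b j₀ ∨ (w j₀ ≠ b j₀ ∧ 2*(|r i₀| * |r j₀|) < m i₀ + m j₀) := by
      by_cases hc : w j₀ = b j₀
      · exact Or.inl hc
      · refine Or.inr ⟨hc, ?_⟩
        have hne1 : α j₀ ≠ α i₀ := fun h => hj₀i (hα h)
        have hne2 : α j₀ ≠ -α i₀ := fun h => hj₀σ (hα (h.trans (hσ i₀).symm))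
        have := stmt15.key_ineq (α i₀) (α j₀) hne1 hne2
        simpa [hmdef, hrdef, mul_comm] using this
    have hstrict : (∑ i, v i) * (∑ i, v i * m i) + (∑ i, w i * r i)^2
        < (∑ i, w i) * (∑ i, w i * m i) := by
      have hsum := stmt15.Hm_sum w b m r hSb hSbm hSbr
      have hpos : 0 < ∑ i, ∑ j, stmt15.Hm w b m r i j := by
        apply Finset.sum_pos'
        · intro i _
          exact Finset.sum_nonneg fun j _ => stmt15.Hm_nonneg w b m r hwpos hbpos hm hrm i j
        · refine ⟨i₀, Finset.mem_univ i₀, Finset.sum_pos' ?_ ⟨j₀, Finset.mem_univ j₀, ?_⟩⟩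
          · intro j _
            exact stmt15.Hm_nonneg w b m r hwpos hbpos hm hrm i₀ j
          · exact stmt15.Hm_pos w b m r hwpos hbpos hm i₀ j₀ hi₀' hkey
      rw [hsum] at hpos
      have hveq : ∀ i : Fin 6, Real.sqrt (w i * b i) = v i := fun i => rfl
      nlinarith [hpos]
    -- contradiction
    have hQAw : QA α w = ∑ i, w i := rfl
    have hQCw : QC α w = ∑ i, w i * m i := rfl
    have hQAv' : QA α v = ∑ i, v i := rfl
    have hQCv' : QC α v = ∑ i, v i * m i := rfl
    have hQBw : QB α w = -(2 * ∑ i, w i * r i) := by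
      simp only [QB, Finset.mul_sum]
      rw [Finset.sum_congr rfl fun i _ => (by ring : w i * (2 * (α i).re) = 2 * (w i * r i))]
    rw [hQAw, hQCw, hQAv', hQCv', hQBw] at hNw
    nlinarith [hNw, hstrict]
  -- QB vanishes
  have hQB : QB α w = 0 := by
    have h1 : ∑ i, w i * (2 * (α i).re) = ∑ i, w (σ i) * (2 * (α (σ i)).re) :=
      (hσbij.sum_comp fun k => w k * (2 * (α k).re)).symm
    have h2 : ∑ i, w (σ i) * (2 * (α (σ i)).re) = -∑ i, w i * (2 * (α i).re) := by
      rw [← Finset.sum_neg_distrib]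
      refine Finset.sum_congr rfl fun i _ => ?_
      rw [hsym i, hσ i, Complex.neg_re]
      ring
    rw [h2] at h1
    have h3 : ∑ i, w i * (2 * (α i).re) = 0 := by linarith
    simp only [QB, h3, neg_zero]
  have hQA : 0 < QA α w := Finset.sum_pos (fun i _ => hwpos i) Finset.univ_nonempty
  have hQC : 0 < QC α w :=
    Finset.sum_pos (fun i _ => mul_pos (hwpos i) (hm i)) Finset.univ_nonempty
  have hcpos : (0:ℝ) < Real.sqrt (QC α w / QA α w) :=
    Real.sqrt_pos.mpr (div_pos hQC hQA)
  refine ⟨hQB, hQA, hQC, hcpos, ?_, ?_⟩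
  · -- the quadratic equation
    have hc2 : Real.sqrt (QC α w / QA α w) ^ 2 = QC α w / QA α w :=
      Real.sq_sqrt (div_nonneg hQC.le hQA.le)
    have hc2' : ((Real.sqrt (QC α w / QA α w) : ℝ) : ℂ) ^ 2 = (QC α w : ℂ) / (QA α w : ℂ) := by
      rw [← Complex.ofReal_pow, hc2, Complex.ofReal_div]
    have hAne : (QA α w : ℂ) ≠ 0 := Complex.ofReal_ne_zero.mpr hQA.ne'
    rw [hQB]
    rw [mul_pow, Complex.I_sq, hc2']
    push_cast
    field_simp
    ring
  · -- the fundamental domain alternative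
    set c : ℝ := Real.sqrt (QC α w / QA α w) with hcdef
    rcases le_or_gt 1 c with h1 | h1
    · left
      constructor
      · simp [Complex.mul_I_re]
      · rw [norm_mul, Complex.norm_I, Complex.norm_real, mul_one, Real.norm_eq_abs, abs_of_pos hcpos]
        exact h1
    · right
      constructor
      · rw [← Complex.ofReal_inv]
        simp [Complex.mul_I_re]
      · rw [norm_mul, Complex.norm_I, norm_inv, Complex.norm_real, mul_one, Real.norm_eq_abs, abs_of_pos hcpos]
        exact one_le_inv_iff₀.mpr ⟨hcpos, h1.le⟩
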